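/- Let T be a strongly connected tournament of order n ≥ 9, and assume that there exists at most one non-critical vertex w of T such that the strongly connected subtournament T−w is isomorphic to T_{n−2,n−1}. If T has at least 4 non-critical vertices, then T contains at least 6 strongly connected subtournaments of order n−2 (s_{n−2}(T) ≥ 6). Moreover, if T has at least 5 non-critical vertices, then s_{n−2}(T) ≥ 7. -/

import Mathlib

/-- A tournament on a vertex type `V`: every ordered pair of distinct vertices
carries exactly one arc. `adj v w = true` means there is an arc from `v` to `w`
(`v` dominates `w`). -/
structure Tournament (V : Type*) where
  adj : V → V → Bool
  irrefl : ∀ v, adj v v = false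
  compl : ∀ v w, v ≠ w → adj v w = !adj w v

namespace Tournament

variable {V : Type*} {W : Type*}

/-- The subtournament induced on a set of vertices. -/
def restrict (T : Tournament V) (s : Set V) : Tournament s where
  adj a b := T.adj a b
  irrefl a := T.irrefl a
  compl a b h := T.compl a b (fun hab => h (Subtype.ext hab))

/-- A tournament is strongly connected if every vertex can be reached from
every other one by a directed path. -/
def Strong (T : Tournament V) : Prop :=
  ∀ v w : V, Relation.ReflTransGen (fun a b => T.adj a b = true) v w

/-- A vertex of a tournament is non-critical if deleting it leaves a strongly
connected tournament. -/
def Noncritical (T : Tournament V) (w : V) : Prop :=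
  (T.restrict {x | x ≠ w}).Strong

/-- There is a directed walk of length `k` from `v` to `w`. -/
def HasWalk (T : Tournament V) (v w : V) (k : ℕ) : Prop :=
  ∃ f : Fin (k + 1) → V, f 0 = v ∧ f (Fin.last k) = w ∧
    ∀ i : Fin k, T.adj (f i.castSucc) (f i.succ) = true

/-- The distance from `v` to `w`: the length of a shortest directed path. -/
noncomputable def dist (T : Tournament V) (v w : V) : ℕ :=
  sInf {k | T.HasWalk v w k}

/-- The diameter: the maximum distance over ordered pairs of distinct vertices. -/
noncomputable def diam (T : Tournament V) : ℕ :=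
  sSup {m | ∃ v w : V, v ≠ w ∧ T.dist v w = m}

/-- Cyclic successor on `Fin ℓ`. -/
def cyc {ℓ : ℕ} (i : Fin ℓ) : Fin ℓ :=
  if h : i.val + 1 < ℓ then ⟨i.val + 1, h⟩ else ⟨0, i.pos⟩

/-- The number of circuits (directed cycles through distinct vertices) of
length `ℓ` in `T`.  Each circuit is represented by exactly `ℓ` cyclic
parametrisations, whence the division. -/
noncomputable def circCount (T : Tournament V) (ℓ : ℕ) : ℕ :=
  Nat.card {f : Fin ℓ → V // Function.Injective f ∧
    ∀ i : Fin ℓ, T.adj (f i) (f (cyc i)) = true} / ℓ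

/-- The number of circuits of length `ℓ` in `T` passing through the vertex `w`. -/
noncomputable def circCountAt (T : Tournament V) (ℓ : ℕ) (w : V) : ℕ :=
  Nat.card {f : Fin ℓ → V // Function.Injective f ∧
    (∀ i : Fin ℓ, T.adj (f i) (f (cyc i)) = true) ∧ ∃ i, f i = w} / ℓ

/-- The number of strongly connected subtournaments of order `ℓ` in `T`. -/
noncomputable def strongSubCount (T : Tournament V) (ℓ : ℕ) : ℕ :=
  Nat.card {s : Finset V // s.card = ℓ ∧ (T.restrict ↑s).Strong}

/-- Isomorphism of tournaments. -/
def Iso (T : Tournament V) (S : Tournament W) : Prop :=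
  ∃ e : V ≃ W, ∀ a b : V, T.adj a b = S.adj (e a) (e b)

/-- Build a tournament from the function `f` recording which arcs point
"upwards" with respect to a linear order on the vertices. -/
def ofFn [LinearOrder V] (f : V → V → Bool) : Tournament V where
  adj u v := if u < v then f u v else if v < u then !f v u else false
  irrefl v := by simp
  compl u v h := by
    rcases lt_trichotomy u v with h1 | h1 | h1
    · simp [h1, not_lt_of_gt h1]
    · exact absurd h1 h
    · simp [h1, not_lt_of_gt h1]

/-- The tournament `T_{n-1,n}(z_0,…,z_{n-1})`: `z_i → z_{i+1}` and `z_j → z_i`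
for `j > i + 1`. -/
def lineT (n : ℕ) : Tournament (Fin n) :=
  ofFn fun i j => decide (j.val = i.val + 1)

end Tournament

open Fin.CommRing

namespace Tournament

section Basics
variable {V : Type*} {W : Type*} {U : Type*}

lemma adj_total (T : Tournament V) {x y : V} (h : x ≠ y) :
    T.adj x y = true ∨ T.adj y x = true := by
  have hc := T.compl x y h
  cases hyx : T.adj y x
  · left; rw [hc, hyx]; rfl
  · right; rfl

lemma adj_asymm (T : Tournament V) {x y : V} (h : x ≠ y) (h1 : T.adj x y = true) :
    T.adj y x = false := by
  have hc := T.compl x y h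
  cases hyx : T.adj y x
  · rfl
  · rw [hyx] at hc; rw [h1] at hc; simp at hc

lemma ne_of_adj (T : Tournament V) {x y : V} (h : T.adj x y = true) : x ≠ y := by
  rintro rfl; rw [T.irrefl] at h; simp at h

lemma adj_of_not_adj (T : Tournament V) {x y : V} (h : x ≠ y) (h1 : T.adj x y ≠ true) :
    T.adj y x = true := by
  rcases T.adj_total h with h2 | h2
  · exact absurd h2 h1
  · exact h2

/-- Criterion: if every nonempty proper subset receives an arc from outside, the
tournament is strong. -/
lemma strong_of_into (T : Tournament V)
    (H : ∀ A : Set V, A.Nonempty → Aᶜ.Nonempty → ∃ x y, x ∉ A ∧ y ∈ A ∧ T.adj x y = true) :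
    T.Strong := by
  intro v w
  by_contra hvw
  set R : Set V := {y | Relation.ReflTransGen (fun a b => T.adj a b = true) v y} with hR
  have hvR : v ∈ R := Relation.ReflTransGen.refl
  obtain ⟨x, y, hx, hy, hadj⟩ := H Rᶜ ⟨w, hvw⟩ ⟨v, by simpa using hvR⟩
  have hx' : x ∈ R := by simpa using hx
  exact hy (Relation.ReflTransGen.tail hx' hadj)

lemma Iso.refl (T : Tournament V) : T.Iso T := ⟨Equiv.refl V, fun _ _ => _root_.rfl⟩

lemma Iso.symm {T : Tournament V} {S : Tournament W} (h : T.Iso S) : S.Iso T := by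
  obtain ⟨e, he⟩ := h
  exact ⟨e.symm, fun a b => by rw [he (e.symm a) (e.symm b), e.apply_symm_apply,
    e.apply_symm_apply]⟩

lemma Iso.trans {T : Tournament V} {S : Tournament W} {R : Tournament U}
    (h1 : T.Iso S) (h2 : S.Iso R) : T.Iso R := by
  obtain ⟨e, he⟩ := h1; obtain ⟨f, hf⟩ := h2
  exact ⟨e.trans f, fun a b => by rw [he, hf]; rfl⟩

lemma Iso.strong {T : Tournament V} {S : Tournament W} (h : T.Iso S) (hT : T.Strong) :
    S.Strong := by
  obtain ⟨e, he⟩ := h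
  intro v w
  have key := Relation.ReflTransGen.lift (p := fun a b => S.adj a b = true) e
    (fun x y hxy => show S.adj (e x) (e y) = true by rw [← he]; exact hxy) _ _ (hT (e.symm v) (e.symm w))
  simpa [Function.onFun] using key

lemma Iso.strong_iff {T : Tournament V} {S : Tournament W} (h : T.Iso S) :
    T.Strong ↔ S.Strong := ⟨h.strong, h.symm.strong⟩

lemma Iso.restrict_ne {T : Tournament V} {S : Tournament W} (e : V ≃ W)
    (he : ∀ a b, T.adj a b = S.adj (e a) (e b)) (w : V) :
    (T.restrict {x | x ≠ w}).Iso (S.restrict {y | y ≠ e w}) := by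
  refine ⟨e.subtypeEquiv (fun a => ?_), fun a b => he a.1 b.1⟩
  simpa using (EmbeddingLike.apply_eq_iff_eq e (a := a) (b := w)).symm.not

lemma Iso.noncritical_iff {T : Tournament V} {S : Tournament W} (e : V ≃ W)
    (he : ∀ a b, T.adj a b = S.adj (e a) (e b)) (w : V) :
    T.Noncritical w ↔ S.Noncritical (e w) :=
  (Iso.restrict_ne e he w).strong_iff

end Basics

end Tournament
namespace Tournament

section Camion
variable {X : Type*} [Fintype X] [DecidableEq X] (S : Tournament X)

lemma crossing {r : X → X → Prop} {R : Set X} {a b : X} (h : Relation.ReflTransGen r a b)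
    (ha : a ∉ R) (hb : b ∈ R) : ∃ u u', u ∉ R ∧ u' ∈ R ∧ r u u' := by
  induction h with
  | refl => exact absurd hb ha
  | @tail x y _ h₂ ih =>
    by_cases hx : x ∈ R
    · exact ih hx
    · exact ⟨x, y, hx, hb, h₂⟩

lemma exists_cycle3 (hS : S.Strong) (h2 : 2 ≤ Fintype.card X) :
    ∃ a b c : X, a ≠ b ∧ b ≠ c ∧ a ≠ c ∧
      S.adj a b = true ∧ S.adj b c = true ∧ S.adj c a = true := by
  by_contra hno
  push_neg at hno
  -- transitivity
  have htrans : ∀ a b c : X, S.adj a b = true → S.adj b c = true → S.adj a c = true := by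
    intro a b c hab hbc
    have hab' : a ≠ b := S.ne_of_adj hab
    have hbc' : b ≠ c := S.ne_of_adj hbc
    have hac' : a ≠ c := by
      rintro rfl
      have := S.adj_asymm hab' hab
      rw [this] at hbc; simp at hbc
    rcases S.adj_total hac' with h | h
    · exact h
    · exact absurd h (by simpa using hno a b c hab' hbc' hac' hab hbc)
  -- vertex of maximal out-degree
  haveI : Nonempty X := Fintype.card_pos_iff.mp (by omega)
  obtain ⟨M, -, hM⟩ := Finset.exists_max_image Finset.univ
    (fun v => (Finset.univ.filter (fun y => S.adj v y = true)).card)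
    ⟨Classical.arbitrary X, Finset.mem_univ _⟩
  have hdom : ∀ x : X, x ≠ M → S.adj M x = true := by
    intro x hx
    by_contra hMx
    have hxM : S.adj x M = true := S.adj_of_not_adj (Ne.symm hx) hMx
    have hsub : (Finset.univ.filter (fun y => S.adj M y = true)) ⊂
        (Finset.univ.filter (fun y => S.adj x y = true)) := by
      constructor
      · intro y hy
        simp only [Finset.mem_filter, Finset.mem_univ, true_and] at hy ⊢
        exact htrans x M y hxM hy
      · intro hcon
        have hMmem : M ∈ Finset.univ.filter (fun y => S.adj x y = true) := by
          simp [hxM]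
        have := hcon hMmem
        simp [S.irrefl] at this
    have := Finset.card_lt_card hsub
    have h2 := hM x (Finset.mem_univ x)
    omega
  -- no arcs into M
  have hnoin : ∀ x : X, S.adj x M = false := by
    intro x
    by_cases hx : x = M
    · rw [hx]; exact S.irrefl M
    · exact S.adj_asymm (Ne.symm hx) (hdom x hx)
  obtain ⟨z, hz⟩ := Fintype.exists_ne_of_one_lt_card (by omega) M
  have hpath := hS z M
  rcases (Relation.ReflTransGen.cases_tail hpath) with h | ⟨c, _, hc2⟩
  · exact hz h.symm
  · rw [hnoin c] at hc2; simp at hc2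

lemma exists_insert_pos {k : ℕ} [NeZero k] (f : Fin k → X)
    (hadj : ∀ i, S.adj (f i) (f (i + 1)) = true) (v : X) (hv : ∀ i, v ≠ f i)
    (hin : ∃ i, S.adj (f i) v = true) (hout : ∃ j, S.adj v (f j) = true) :
    ∃ i, S.adj (f i) v = true ∧ S.adj v (f (i + 1)) = true := by
  by_contra hno
  push_neg at hno
  have hstep : ∀ i, S.adj (f i) v = true → S.adj (f (i+1)) v = true := by
    intro i hi
    have h2 := hno i hi
    exact S.adj_of_not_adj (hv (i+1)) (by simpa using h2)
  obtain ⟨i0, hi0⟩ := hin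
  have hall : ∀ j, S.adj (f j) v = true := by
    have key : ∀ t : ℕ, S.adj (f (i0 + (t : Fin k))) v = true := by
      intro t
      induction t with
      | zero => simpa using hi0
      | succ s ih =>
        have hc : ((s+1 : ℕ) : Fin k) = (s : Fin k) + 1 := by push_cast; ring
        rw [hc, ← add_assoc]
        exact hstep _ ih
    intro j
    have := key (j - i0).val
    rwa [Fin.cast_val_eq_self, add_comm, sub_add_cancel] at this
  obtain ⟨j, hj⟩ := hout
  have := S.adj_asymm (S.ne_of_adj hj) hj
  rw [hall j] at this; simp at this

end Camion

end Tournament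
namespace Tournament

section Camion2
variable {X : Type*}

lemma fin_val_add_one {k : ℕ} [NeZero k] (hk : 2 ≤ k) (i : Fin k) :
    (i + 1).val = if i.val + 1 = k then 0 else i.val + 1 := by
  rw [Fin.val_add, Fin.val_one']
  rw [Nat.mod_eq_of_lt (show 1 < k by omega)]
  have hi := i.isLt
  by_cases h : i.val + 1 = k
  · rw [if_pos h, h, Nat.mod_self]
  · rw [if_neg h, Nat.mod_eq_of_lt (by omega)]

lemma cyc_eq_add_one {k : ℕ} [NeZero k] (i : Fin k) : cyc i = i + 1 := by
  have hk : 1 ≤ k := Nat.one_le_iff_ne_zero.mpr (NeZero.ne k)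
  have hi := i.isLt
  rcases Nat.lt_or_ge 1 k with hk2 | hk2
  · apply Fin.ext
    rw [fin_val_add_one (by omega)]
    unfold cyc
    by_cases h : i.val + 1 < k
    · rw [dif_pos h, if_neg (by omega)]
    · rw [dif_neg h, if_pos (by omega)]
  · -- k = 1
    have hk1 : k = 1 := by omega
    subst hk1
    apply Fin.ext
    have : i = 0 := Fin.ext (by omega)
    subst this
    rfl

lemma extend_one {k : ℕ} [NeZero k] (S : Tournament X) (hk3 : 3 ≤ k) (f : Fin k → X)
    (hinj : Function.Injective f)
    (hadj : ∀ i, S.adj (f i) (f (i + 1)) = true) (v : X) (hv : ∀ i, v ≠ f i)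
    (i0 : Fin k) (h1 : S.adj (f i0) v = true) (h2 : S.adj v (f (i0 + 1)) = true) :
    ∃ f' : Fin (k+1) → X, Function.Injective f' ∧ ∀ i, S.adj (f' i) (f' (i + 1)) = true := by
  set g : Fin k → X := fun i => f (i + (i0 + 1)) with hg
  have hginj : Function.Injective g := fun a b hab => add_right_cancel (hinj hab)
  have hvg : ∀ i, v ≠ g i := fun i => hv _
  have hgadj : ∀ i, S.adj (g i) (g (i + 1)) = true := by
    intro i
    have heq : (i + 1) + (i0 + 1) = (i + (i0 + 1)) + 1 := by ring
    show S.adj (f (i + (i0 + 1))) (f ((i + 1) + (i0 + 1))) = true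
    rw [heq]; exact hadj _
  have hglast : g ⟨k-1, by omega⟩ = f i0 := by
    show f _ = f i0
    congr 1
    have hval : ((⟨k-1, by omega⟩ : Fin k) + 1) = 0 := by
      apply Fin.ext
      rw [fin_val_add_one (by omega)]
      simp only [Fin.val_zero]
      rw [if_pos (by omega)]
    calc (⟨k-1, by omega⟩ : Fin k) + (i0 + 1) = ((⟨k-1, by omega⟩ : Fin k) + 1) + i0 := by ring
    _ = i0 := by rw [hval, zero_add]
  have hg0 : g 0 = f (i0 + 1) := by show f _ = _; rw [zero_add]
  refine ⟨fun i => if h : i.val < k then g ⟨i.val, h⟩ else v, ?_, ?_⟩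
  · intro a b hab
    beta_reduce at hab
    by_cases ha : a.val < k
    · rw [dif_pos ha] at hab
      by_cases hb : b.val < k
      · rw [dif_pos hb] at hab
        have h := hginj hab
        have h' : a.val = b.val := by simpa using congrArg Fin.val h
        exact Fin.ext h'
      · rw [dif_neg hb] at hab
        exact absurd hab.symm (hvg _)
    · rw [dif_neg ha] at hab
      by_cases hb : b.val < k
      · rw [dif_pos hb] at hab
        exact absurd hab (hvg _)
      · rw [dif_neg hb] at hab
        have := a.isLt; have := b.isLt
        exact Fin.ext (by omega)
  · intro i
    beta_reduce
    have hilt := i.isLt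
    have hsucc := fin_val_add_one (show 2 ≤ k+1 by omega) i
    rcases Nat.lt_trichotomy i.val (k-1) with hc | hc | hc
    · have p1 : i.val < k := by omega
      have hs : (i+1).val = i.val + 1 := by rw [hsucc, if_neg (by omega)]
      have p2 : (i+1).val < k := by omega
      rw [dif_pos p1, dif_pos p2]
      have he : (⟨(i+1).val, p2⟩ : Fin k) = ⟨i.val, p1⟩ + 1 := by
        have hr : ((⟨i.val, p1⟩ + 1 : Fin k)).val = i.val + 1 := by
          rw [fin_val_add_one (by omega)]
          rw [if_neg (show (⟨i.val, p1⟩ : Fin k).val + 1 ≠ k by show i.val + 1 ≠ k; omega)]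
        apply Fin.ext
        rw [hr]
        exact hs
      rw [he]
      exact hgadj _
    · have p1 : i.val < k := by omega
      have hs : (i+1).val = i.val + 1 := by rw [hsucc, if_neg (by omega)]
      have p2 : ¬ ((i+1).val < k) := by omega
      rw [dif_pos p1, dif_neg p2]
      have he : (⟨i.val, p1⟩ : Fin k) = ⟨k-1, by omega⟩ := Fin.ext (by simp only []; omega)
      rw [he, hglast]
      exact h1
    · have hik : i.val = k := by omega
      have p1 : ¬ (i.val < k) := by omega
      have hs : (i+1).val = 0 := by rw [hsucc, if_pos (by omega)]
      have p2 : (i+1).val < k := by omega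
      rw [dif_neg p1, dif_pos p2]
      have he : (⟨(i+1).val, p2⟩ : Fin k) = 0 := Fin.ext (by simp only [Fin.val_zero]; omega)
      rw [he, hg0]
      exact h2

lemma extend_two {k : ℕ} [NeZero k] (S : Tournament X) (hk3 : 3 ≤ k) (f : Fin k → X)
    (hinj : Function.Injective f)
    (hadj : ∀ i, S.adj (f i) (f (i + 1)) = true) (a b : X)
    (hva : ∀ i, a ≠ f i) (hvb : ∀ i, b ≠ f i)
    (hadom : ∀ i, S.adj a (f i) = true) (hbdom : ∀ i, S.adj (f i) b = true)
    (hba : S.adj b a = true) :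
    ∃ f' : Fin (k+2) → X, Function.Injective f' ∧ ∀ i, S.adj (f' i) (f' (i + 1)) = true := by
  have hab : b ≠ a := S.ne_of_adj hba
  refine ⟨fun i => if h : i.val < k then f ⟨i.val, h⟩ else if i.val = k then b else a, ?_, ?_⟩
  · intro x y hxy
    beta_reduce at hxy
    have hx := x.isLt; have hy := y.isLt
    by_cases h1 : x.val < k
    · rw [dif_pos h1] at hxy
      by_cases h2 : y.val < k
      · rw [dif_pos h2] at hxy
        exact Fin.ext (by simpa using congrArg Fin.val (hinj hxy))
      · rw [dif_neg h2] at hxy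
        by_cases h3 : y.val = k
        · rw [if_pos h3] at hxy; exact absurd hxy.symm (hvb _)
        · rw [if_neg h3] at hxy; exact absurd hxy.symm (hva _)
    · rw [dif_neg h1] at hxy
      by_cases h2 : y.val < k
      · rw [dif_pos h2] at hxy
        by_cases h3 : x.val = k
        · rw [if_pos h3] at hxy; exact absurd hxy (hvb _)
        · rw [if_neg h3] at hxy; exact absurd hxy (hva _)
      · rw [dif_neg h2] at hxy
        by_cases h3 : x.val = k <;> by_cases h4 : y.val = k
        · exact Fin.ext (by omega)
        · rw [if_pos h3, if_neg h4] at hxy; exact absurd hxy hab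
        · rw [if_neg h3, if_pos h4] at hxy; exact absurd hxy.symm hab
        · exact Fin.ext (by omega)
  · intro i
    beta_reduce
    have hilt := i.isLt
    have hsucc := fin_val_add_one (show 2 ≤ k+2 by omega) i
    rcases Nat.lt_trichotomy i.val (k-1) with hc | hc | hc
    · have p1 : i.val < k := by omega
      have hs : (i+1).val = i.val + 1 := by rw [hsucc, if_neg (by omega)]
      have p2 : (i+1).val < k := by omega
      rw [dif_pos p1, dif_pos p2]
      have he : (⟨(i+1).val, p2⟩ : Fin k) = ⟨i.val, p1⟩ + 1 := by
        have hr : ((⟨i.val, p1⟩ + 1 : Fin k)).val = i.val + 1 := by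
          rw [fin_val_add_one (by omega)]
          rw [if_neg (show (⟨i.val, p1⟩ : Fin k).val + 1 ≠ k by show i.val + 1 ≠ k; omega)]
        apply Fin.ext
        rw [hr]
        exact hs
      rw [he]
      exact hadj _
    · have p1 : i.val < k := by omega
      have hs : (i+1).val = i.val + 1 := by rw [hsucc, if_neg (by omega)]
      have p2 : ¬ ((i+1).val < k) := by omega
      rw [dif_pos p1, dif_neg p2, if_pos (by omega)]
      exact hbdom _
    · rcases Nat.lt_trichotomy i.val k with hd | hd | hd
      · omega
      · have p1 : ¬ (i.val < k) := by omega
        have hs : (i+1).val = i.val + 1 := by rw [hsucc, if_neg (by omega)]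
        have p2 : ¬ ((i+1).val < k) := by omega
        rw [dif_neg p1, dif_neg p2, if_pos hd, if_neg (by omega)]
        exact hba
      · have hik : i.val = k + 1 := by omega
        have p1 : ¬ (i.val < k) := by omega
        have hs : (i+1).val = 0 := by rw [hsucc, if_pos (by omega)]
        have p2 : (i+1).val < k := by omega
        rw [dif_neg p1, dif_pos p2, if_neg (by omega)]
        have he : (⟨(i+1).val, p2⟩ : Fin k) = ⟨0, by omega⟩ := Fin.ext (by simp only []; omega)
        rw [he]
        exact hadom _
end Camion2

end Tournament
namespace Tournament

section Camion3
variable {X : Type*} [Fintype X] [DecidableEq X] (S : Tournament X)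

omit [Fintype X] [DecidableEq X] in
lemma three_cycle_fun {a b c : X} (hab : a ≠ b) (hbc : b ≠ c) (hac : a ≠ c)
    (h1 : S.adj a b = true) (h2 : S.adj b c = true) (h3 : S.adj c a = true) :
    ∃ f : Fin 3 → X, Function.Injective f ∧ ∀ i, S.adj (f i) (f (cyc i)) = true := by
  refine ⟨![a, b, c], ?_, ?_⟩
  · intro i j hij
    fin_cases i <;> fin_cases j <;> simp_all
  · intro i
    fin_cases i
    · show S.adj a b = true; exact h1
    · show S.adj b c = true; exact h2
    · show S.adj c a = true; exact h3

lemma cycle_grow (hS : S.Strong) {k : ℕ} (hk3 : 3 ≤ k) (hkc : k < Fintype.card X)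
    (f : Fin k → X) (hinj : Function.Injective f)
    (hadjc : ∀ i, S.adj (f i) (f (cyc i)) = true) :
    ∃ k', k < k' ∧ 3 ≤ k' ∧ ∃ f' : Fin k' → X, Function.Injective f' ∧
      ∀ i, S.adj (f' i) (f' (cyc i)) = true := by
  haveI : NeZero k := ⟨by omega⟩
  have hadj : ∀ i, S.adj (f i) (f (i + 1)) = true := by
    intro i; rw [← cyc_eq_add_one]; exact hadjc i
  have houtside : ∃ v : X, ∀ i, v ≠ f i := by
    by_contra hno
    push_neg at hno
    have hsurj : Function.Surjective f := by
      intro v; obtain ⟨i, hi⟩ := hno v; exact ⟨i, hi.symm⟩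
    have := Fintype.card_le_of_surjective f hsurj
    simp at this; omega
  by_cases hinhom : ∃ v : X, (∀ i, v ≠ f i) ∧ (∃ i, S.adj (f i) v = true) ∧
      (∃ j, S.adj v (f j) = true)
  · obtain ⟨v, hv, hin, hout'⟩ := hinhom
    obtain ⟨i0, hi1, hi2⟩ := S.exists_insert_pos f hadj v hv hin hout'
    obtain ⟨f', h1, h2⟩ := S.extend_one hk3 f hinj hadj v hv i0 hi1 hi2
    exact ⟨k+1, by omega, by omega, f', h1, fun i => by rw [cyc_eq_add_one]; exact h2 i⟩
  · push_neg at hinhom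
    have hhom : ∀ v : X, (∀ i, v ≠ f i) →
        (∀ i, S.adj v (f i) = true) ∨ (∀ i, S.adj (f i) v = true) := by
      intro v hv
      by_cases hi : ∃ i, S.adj (f i) v = true
      · right
        intro i
        have hnoout := hinhom v hv hi
        exact S.adj_of_not_adj (hv i) (by simpa using hnoout i)
      · left
        intro i
        push_neg at hi
        exact S.adj_of_not_adj (Ne.symm (hv i)) (by simpa using hi i)
    obtain ⟨v0, hv0⟩ := houtside
    obtain ⟨u1, u1', hu1, hu1', hadj1⟩ := crossing (R := (Set.range f)ᶜ) (hS (f 0) v0)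
      (by simp)
      (by simp only [Set.mem_compl_iff, Set.mem_range, not_exists]
          exact fun i h => hv0 i h.symm)
    obtain ⟨t1, rfl⟩ : u1 ∈ Set.range f := by simpa using hu1
    have hu1'r : ∀ i, u1' ≠ f i := by
      intro i hi; exact (by simpa using hu1' : u1' ∉ Set.range f) ⟨i, hi.symm⟩
    have hb0 : ∀ i, S.adj (f i) u1' = true := by
      rcases hhom u1' hu1'r with hL | hR
      · exfalso
        have := S.adj_asymm (S.ne_of_adj hadj1) hadj1
        rw [hL t1] at this; simp at this
      · exact hR
    set Bset : Set X := {v | (∀ i, v ≠ f i) ∧ ∀ i, S.adj (f i) v = true} with hBset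
    have hu1'B : u1' ∈ Bset := ⟨hu1'r, hb0⟩
    have hf0B : f 0 ∈ Bsetᶜ := by
      intro hf0
      exact (hf0.1 0) rfl
    obtain ⟨u2, u2', hu2, hu2', hadj2⟩ := crossing (R := Bsetᶜ) (hS u1' (f 0))
      (by simpa using hu1'B) hf0B
    have hu2B : u2 ∈ Bset := by simpa using hu2
    have hu2'r : ∀ i, u2' ≠ f i := by
      intro i hi
      have h := S.adj_asymm (S.ne_of_adj hadj2) hadj2
      rw [hi] at h
      have h2x := hu2B.2 i
      rw [h] at h2x
      simp at h2x
    have hu2'A : ∀ i, S.adj u2' (f i) = true := by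
      rcases hhom u2' hu2'r with hL | hR
      · exact hL
      · exact absurd (show u2' ∈ Bset from ⟨hu2'r, hR⟩) hu2'
    obtain ⟨f', h1, h2⟩ := S.extend_two hk3 f hinj hadj u2' u2 hu2'r
      (fun i => hu2B.1 i) hu2'A (fun i => hu2B.2 i) hadj2
    exact ⟨k+2, by omega, by omega, f', h1, fun i => by rw [cyc_eq_add_one]; exact h2 i⟩

lemma exists_ham (hS : S.Strong) (h3 : 3 ≤ Fintype.card X) :
    ∃ f : Fin (Fintype.card X) → X, Function.Bijective f ∧
      ∀ i, S.adj (f i) (f (cyc i)) = true := by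
  have main : ∀ d k, 3 ≤ k → Fintype.card X - k ≤ d →
      (∃ f : Fin k → X, Function.Injective f ∧ ∀ i, S.adj (f i) (f (cyc i)) = true) →
      ∃ f : Fin (Fintype.card X) → X, Function.Injective f ∧
        ∀ i, S.adj (f i) (f (cyc i)) = true := by
    intro d
    induction d with
    | zero =>
      intro k hk3 hkd hf
      obtain ⟨f, hinj, hadj⟩ := hf
      have hle : k ≤ Fintype.card X := by
        have := Fintype.card_le_of_injective f hinj
        simpa using this
      have hkc : k = Fintype.card X := by omega
      subst hkc
      exact ⟨f, hinj, hadj⟩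
    | succ d ih =>
      intro k hk3 hkd hf
      obtain ⟨f, hinj, hadj⟩ := hf
      by_cases hcase : k < Fintype.card X
      · obtain ⟨k', hk', hk'3, f', h1, h2⟩ := S.cycle_grow hS hk3 hcase f hinj hadj
        have hle : k' ≤ Fintype.card X := by
          have := Fintype.card_le_of_injective f' h1
          simpa using this
        exact ih k' (by omega) (by omega) ⟨f', h1, h2⟩
      · have hle : k ≤ Fintype.card X := by
          have := Fintype.card_le_of_injective f hinj
          simpa using this
        have hkc : k = Fintype.card X := by omega
        subst hkc
        exact ⟨f, hinj, hadj⟩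
  obtain ⟨a, b, c, hab, hbc, hac, h1, h2, h3c⟩ := S.exists_cycle3 hS (by omega)
  have hf3 := S.three_cycle_fun hab hbc hac h1 h2 h3c
  obtain ⟨f, hinj, hadj⟩ := main (Fintype.card X) 3 le_rfl (by omega) hf3
  exact ⟨f, (Fintype.bijective_iff_injective_and_card f).2 ⟨hinj, by simp⟩, hadj⟩

end Camion3

end Tournament
namespace Tournament

section Criterion
variable {m : ℕ} [NeZero m]

lemma fin_cast_inj {a b : ℕ} (ha : a < m) (hb : b < m) :
    ((a : Fin m) = (b : Fin m)) ↔ a = b := by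
  constructor
  · intro h
    have := congrArg Fin.val h
    rwa [Fin.val_natCast, Fin.val_natCast, Nat.mod_eq_of_lt ha, Nat.mod_eq_of_lt hb] at this
  · rintro rfl; rfl

lemma fin_cast_ne_zero {a : ℕ} (h1 : 1 ≤ a) (h2 : a < m) : (a : Fin m) ≠ 0 := by
  intro h
  have : a = 0 := by
    have := congrArg Fin.val h
    rwa [Fin.val_natCast, Nat.mod_eq_of_lt h2, Fin.val_zero] at this
  omega

lemma add_cast_ne {c : Fin m} {a : ℕ} (h1 : 1 ≤ a) (h2 : a ≤ m - 1) :
    c + (a : Fin m) ≠ c := by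
  have hm : 1 ≤ m := Nat.one_le_iff_ne_zero.mpr (NeZero.ne m)
  intro h
  have : (a : Fin m) = 0 := by
    have := congrArg (fun z => z - c) h
    simpa [add_comm, add_sub_cancel_right] using this
  exact fin_cast_ne_zero h1 (by omega) this

/-- Cut-crossing criterion for noncriticality of `c` in a tournament on `Fin m`
containing the standard cycle. -/
lemma noncrit_of_cuts (U : Tournament (Fin m)) (hm : 3 ≤ m)
    (hcyc : ∀ i, U.adj i (i + 1) = true) (c : Fin m)
    (H : ∀ k : ℕ, 1 ≤ k → k ≤ m - 2 → ∃ a b : ℕ, 1 ≤ a ∧ a ≤ k ∧ k + 1 ≤ b ∧ b ≤ m - 1 ∧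
      U.adj (c + (b : Fin m)) (c + (a : Fin m)) = true) :
    U.Noncritical c := by
  classical
  apply strong_of_into
  intro A hA hAc
  set A' : Set (Fin m) := {x | ∃ h : x ∈ {x : Fin m | x ≠ c}, (⟨x, h⟩ : {x : Fin m // x ∈ {x : Fin m | x ≠ c}}) ∈ A} with hA'
  set B : Finset ℕ := (Finset.Icc 1 (m-1)).filter (fun a => (c + (a : Fin m)) ∈ A') with hB
  -- representation of subtype elements
  have hrep : ∀ x : {x : Fin m // x ∈ {x : Fin m | x ≠ c}}, ∃ a : ℕ, 1 ≤ a ∧ a ≤ m - 1 ∧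
      (x : Fin m) = c + (a : Fin m) := by
    rintro ⟨x, hx⟩
    have hx' : x ≠ c := hx
    refine ⟨((x - c : Fin m)).val, ?_, ?_, ?_⟩
    · have : (x - c : Fin m) ≠ 0 := fun h => hx' (by
        have := congrArg (fun z => z + c) h
        simpa [sub_add_cancel] using this)
      have : ((x - c : Fin m)).val ≠ 0 := fun h => this (Fin.ext (by simp [h]))
      omega
    · have := ((x - c : Fin m)).isLt
      omega
    · rw [Fin.cast_val_eq_self, add_comm, sub_add_cancel]
  have hmemA' : ∀ a : ℕ, 1 ≤ a → a ≤ m - 1 →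
      ((c + (a : Fin m)) ∈ A' ↔ ∀ h : (c + (a : Fin m)) ∈ {x : Fin m | x ≠ c},
        (⟨c + (a : Fin m), h⟩ : {x : Fin m // x ∈ {x : Fin m | x ≠ c}}) ∈ A) := by
    intro a h1 h2
    constructor
    · rintro ⟨h, hmem⟩ h'
      exact hmem
    · intro h
      exact ⟨add_cast_ne h1 h2, h (add_cast_ne h1 h2)⟩
  have hBmem : ∀ a : ℕ, 1 ≤ a → a ≤ m - 1 → (a ∈ B ↔ (c + (a : Fin m)) ∈ A') := by
    intro a h1 h2
    rw [hB, Finset.mem_filter, Finset.mem_Icc]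
    constructor
    · rintro ⟨-, h⟩; exact h
    · intro h; exact ⟨⟨h1, h2⟩, h⟩
  by_cases hstep : ∃ t : ℕ, 1 ≤ t ∧ t ≤ m - 2 ∧ t ∉ B ∧ (t+1) ∈ B
  · obtain ⟨t, ht1, ht2, htB, htB'⟩ := hstep
    have hxne := add_cast_ne (m := m) (c := c) ht1 (by omega)
    have hyne := add_cast_ne (m := m) (c := c) (show 1 ≤ t+1 by omega) (by omega)
    refine ⟨⟨c + (t : Fin m), hxne⟩, ⟨c + ((t+1 : ℕ) : Fin m), hyne⟩, ?_, ?_, ?_⟩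
    · intro hmem
      apply htB
      rw [hBmem t ht1 (by omega)]
      exact ⟨hxne, hmem⟩
    · have := (hBmem (t+1) (by omega) (by omega)).mp htB'
      obtain ⟨h, hmem⟩ := this
      exact hmem
    · show U.adj (c + (t : Fin m)) (c + ((t+1 : ℕ) : Fin m)) = true
      have harith : c + ((t+1 : ℕ) : Fin m) = (c + (t : Fin m)) + 1 := by
        push_cast
        ring
      rw [harith]
      exact hcyc _
  · push_neg at hstep
    -- B is downward closed
    have hclosed : ∀ t : ℕ, 1 ≤ t → t ≤ m - 2 → (t+1) ∈ B → t ∈ B := by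
      intro t h1 h2 h3
      by_contra h4
      exact absurd h3 (hstep t h1 h2 h4)
    have hBne : B.Nonempty := by
      obtain ⟨x, hx⟩ := hA
      obtain ⟨a, h1, h2, h3⟩ := hrep x
      refine ⟨a, (hBmem a h1 h2).mpr ?_⟩
      rw [← h3]
      exact ⟨x.2, by simpa using hx⟩
    set k0 := B.max' hBne with hk0
    have hk0B : k0 ∈ B := B.max'_mem hBne
    have hk0bounds : 1 ≤ k0 ∧ k0 ≤ m - 1 := by
      have := hk0B
      rw [hB, Finset.mem_filter, Finset.mem_Icc] at this
      exact this.1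
    have hdown : ∀ a : ℕ, 1 ≤ a → a ≤ k0 → a ∈ B := by
      have key : ∀ d a : ℕ, a + d = k0 → 1 ≤ a → a ∈ B := by
        intro d
        induction d with
        | zero =>
          intro a ha h1
          have haa : a = k0 := by omega
          rw [haa]; exact hk0B
        | succ dd ih =>
          intro a ha h1
          have h2 : a + 1 ∈ B := ih (a+1) (by omega) (by omega)
          exact hclosed a h1 (by omega) h2
      intro a h1 h2
      exact key (k0 - a) a (by omega) h1
    have hk0top : k0 ≤ m - 2 := by
      by_contra hcon
      have hk0m : k0 = m - 1 := by omega
      obtain ⟨y, hy⟩ := hAc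
      obtain ⟨b, h1, h2, h3⟩ := hrep y
      have : b ∈ B := hdown b h1 (by omega)
      rw [hBmem b h1 h2] at this
      obtain ⟨h, hmem⟩ := this
      apply hy
      have : y = ⟨c + (b : Fin m), h⟩ := Subtype.ext h3
      rw [this]
      exact hmem
    obtain ⟨a, b, ha1, ha2, hb1, hb2, harc⟩ := H k0 hk0bounds.1 hk0top
    have haB : a ∈ B := hdown a ha1 (by omega)
    have hbB : b ∉ B := by
      intro hmem
      have := B.le_max' b hmem
      omega
    have hane := add_cast_ne (m := m) (c := c) ha1 (by omega)
    have hbne := add_cast_ne (m := m) (c := c) (by omega) hb2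
    refine ⟨⟨c + (b : Fin m), hbne⟩, ⟨c + (a : Fin m), hane⟩, ?_, ?_, harc⟩
    · intro hmem
      apply hbB
      rw [hBmem b (by omega) hb2]
      exact ⟨hbne, hmem⟩
    · have := (hBmem a ha1 (by omega)).mp haB
      obtain ⟨h, hmem⟩ := this
      exact hmem

end Criterion

end Tournament
namespace Tournament

section Cases
variable {m : ℕ} [NeZero m]

lemma cast_sub_small {j : ℕ} (hj : j ≤ m) : ((m - j : ℕ) : Fin m) = -(j : Fin m) := by
  apply eq_neg_of_add_eq_zero_left
  rw [← Nat.cast_add]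
  rw [show m - j + j = m by omega]
  simp

lemma three_le_nat_card_subtype {α : Type*} [Finite α] {p : α → Prop} (a b c : α)
    (hab : a ≠ b) (hac : a ≠ c) (hbc : b ≠ c) (ha : p a) (hb : p b) (hc : p c) :
    3 ≤ Nat.card {x // p x} := by
  have hinj : Function.Injective (![⟨a,ha⟩,⟨b,hb⟩,⟨c,hc⟩] : Fin 3 → {x // p x}) := by
    intro i j hij
    fin_cases i <;> fin_cases j <;> simp_all [Subtype.ext_iff]
  calc (3 : ℕ) = Nat.card (Fin 3) := by simp
  _ ≤ Nat.card {x // p x} := Nat.card_le_card_of_injective _ hinj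

lemma two_le_nat_card_subtype {α : Type*} [Finite α] {p : α → Prop} (a b : α)
    (hab : a ≠ b) (ha : p a) (hb : p b) :
    2 ≤ Nat.card {x // p x} := by
  have hinj : Function.Injective (![⟨a,ha⟩,⟨b,hb⟩] : Fin 2 → {x // p x}) := by
    intro i j hij
    fin_cases i <;> fin_cases j <;> simp_all [Subtype.ext_iff]
  calc (2 : ℕ) = Nat.card (Fin 2) := by simp
  _ ≤ Nat.card {x // p x} := Nat.card_le_card_of_injective _ hinj

variable (U : Tournament (Fin m))

/-- A forward 2-chord at `e` makes `e+1` non-critical. -/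
lemma noncrit_succ_of_fwd (hm : 8 ≤ m) (hcyc : ∀ i, U.adj i (i + 1) = true)
    (e : Fin m) (he : U.adj e (e + 2) = true) : U.Noncritical (e + 1) := by
  apply U.noncrit_of_cuts (by omega) hcyc
  intro k hk1 hk2
  refine ⟨1, m-1, le_rfl, hk1, by omega, le_rfl, ?_⟩
  have h1 : (e + 1) + ((m-1 : ℕ) : Fin m) = e := by
    rw [cast_sub_small (by omega)]
    push_cast
    ring
  have h2 : (e + 1) + ((1 : ℕ) : Fin m) = e + 2 := by push_cast; ring
  rw [h1, h2]
  exact he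

/-- Generic deletion lemma when backward 2-chords exist outside an exceptional
predicate. -/
lemma noncrit_of_almost_back (hm : 8 ≤ m) (hcyc : ∀ i, U.adj i (i + 1) = true)
    (EXP : Fin m → Prop) (hb : ∀ s, ¬ EXP s → U.adj (s + 2) s = true)
    (c : Fin m) (h1 : ¬ EXP (c + 1)) (h2 : ¬ EXP (c + ((m - 3 : ℕ) : Fin m)))
    (hEX : ∀ k : ℕ, 2 ≤ k → k ≤ m - 3 → EXP (c + (k : Fin m)) → ¬ EXP (c + ((k - 1 : ℕ) : Fin m))) :
    U.Noncritical c := by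
  apply U.noncrit_of_cuts (by omega) hcyc
  intro k hk1 hk2
  rcases Nat.lt_or_ge k 2 with hk | hk
  · -- k = 1
    refine ⟨1, 3, le_rfl, by omega, by omega, by omega, ?_⟩
    have harc := hb (c + 1) h1
    have e1 : (c + 1) + 2 = c + ((3 : ℕ) : Fin m) := by push_cast; ring
    have e2 : (c + 1) = c + ((1 : ℕ) : Fin m) := by push_cast; ring
    rw [e1, e2] at harc
    exact harc
  · rcases Nat.lt_or_ge k (m - 2) with hk' | hk'
    · -- 2 ≤ k ≤ m - 3
      by_cases hexp : EXP (c + (k : Fin m))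
      · have hprev := hEX k hk (by omega) hexp
        refine ⟨k - 1, k + 1, by omega, by omega, by omega, by omega, ?_⟩
        have harc := hb _ hprev
        have e1 : (c + ((k - 1 : ℕ) : Fin m)) + 2 = c + ((k + 1 : ℕ) : Fin m) := by
          obtain ⟨d, rfl⟩ : ∃ d, k = d + 2 := ⟨k - 2, by omega⟩
          rw [show d + 2 - 1 = d + 1 by omega]
          push_cast
          ring
        rw [e1] at harc
        exact harc
      · refine ⟨k, k + 2, by omega, le_rfl, by omega, by omega, ?_⟩
        have harc := hb _ hexp
        have e1 : (c + ((k : ℕ) : Fin m)) + 2 = c + ((k + 2 : ℕ) : Fin m) := by push_cast; ring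
        rw [e1] at harc
        exact harc
    · -- k = m - 2
      refine ⟨m - 3, m - 1, by omega, by omega, by omega, by omega, ?_⟩
      have harc := hb _ h2
      have e1 : (c + ((m - 3 : ℕ) : Fin m)) + 2 = c + ((m - 1 : ℕ) : Fin m) := by
        rw [cast_sub_small (by omega), cast_sub_small (by omega)]
        push_cast
        ring
      rw [e1] at harc
      exact harc

/-- DL-A : a forward chord `x → y` with `x+3 ≤ y ≤ m-2` makes `x+1` non-critical
(given all linear 2-chords backward). -/
lemma noncrit_midA (hm : 8 ≤ m) (hcyc : ∀ i, U.adj i (i + 1) = true)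
    (x y : ℕ) (hx : x + 3 ≤ y) (hy : y ≤ m - 2)
    (hbN : ∀ s : ℕ, s ≤ m - 3 → U.adj ((s + 2 : ℕ) : Fin m) ((s : ℕ) : Fin m) = true)
    (hxy : U.adj ((x : ℕ) : Fin m) ((y : ℕ) : Fin m) = true) :
    U.Noncritical ((x + 1 : ℕ) : Fin m) := by
  apply U.noncrit_of_cuts (by omega) hcyc
  intro k hk1 hk2
  rcases Nat.lt_or_ge k (y - x - 1) with hk | hk
  · -- k ≤ y - x - 2
    refine ⟨k, k + 2, hk1, le_rfl, by omega, by omega, ?_⟩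
    have harc := hbN (x + 1 + k) (by omega)
    have e1 : ((x + 1 + k + 2 : ℕ) : Fin m) = ((x+1 : ℕ) : Fin m) + ((k + 2 : ℕ) : Fin m) := by
      push_cast; ring
    have e2 : ((x + 1 + k : ℕ) : Fin m) = ((x+1 : ℕ) : Fin m) + ((k : ℕ) : Fin m) := by
      push_cast; ring
    rw [e1, e2] at harc
    exact harc
  · refine ⟨y - x - 1, m - 1, by omega, by omega, by omega, le_rfl, ?_⟩
    obtain ⟨d, hd⟩ : ∃ d, y = x + 1 + d ∧ y - x - 1 = d := ⟨y - x - 1, by omega, rfl⟩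
    have e1 : ((x+1 : ℕ) : Fin m) + ((m - 1 : ℕ) : Fin m) = ((x : ℕ) : Fin m) := by
      rw [cast_sub_small (by omega)]
      push_cast
      ring
    have e2 : ((x+1 : ℕ) : Fin m) + ((y - x - 1 : ℕ) : Fin m) = ((y : ℕ) : Fin m) := by
      rw [hd.2, hd.1]
      push_cast
      ring
    rw [e1, e2]
    exact hxy

/-- DL-B : a forward chord `x → m-1` with `1 ≤ x ≤ m-4` makes `m-2` non-critical. -/
lemma noncrit_m2 (hm : 8 ≤ m) (hcyc : ∀ i, U.adj i (i + 1) = true)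
    (x : ℕ) (hx1 : 1 ≤ x) (hx2 : x ≤ m - 4)
    (hbN : ∀ s : ℕ, s ≤ m - 3 → U.adj ((s + 2 : ℕ) : Fin m) ((s : ℕ) : Fin m) = true)
    (hxy : U.adj ((x : ℕ) : Fin m) ((m - 1 : ℕ) : Fin m) = true) :
    U.Noncritical ((m - 2 : ℕ) : Fin m) := by
  apply U.noncrit_of_cuts (by omega) hcyc
  intro k hk1 hk2
  have hc2 : ((m - 2 : ℕ) : Fin m) = -(2 : Fin m) := cast_sub_small (by omega)
  rcases Nat.lt_or_ge k (x + 2) with hk | hk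
  · -- k ≤ x + 1 : use the chord
    refine ⟨1, x + 2, le_rfl, hk1, by omega, by omega, ?_⟩
    have e1 : ((m - 2 : ℕ) : Fin m) + ((x + 2 : ℕ) : Fin m) = ((x : ℕ) : Fin m) := by
      rw [hc2]; push_cast; ring
    have e2 : ((m - 2 : ℕ) : Fin m) + ((1 : ℕ) : Fin m) = ((m - 1 : ℕ) : Fin m) := by
      rw [hc2, cast_sub_small (by omega)]
      push_cast; ring
    rw [e1, e2]
    exact hxy
  · rcases Nat.lt_or_ge k (m - 2) with hk' | hk'
    · -- x + 2 ≤ k ≤ m - 3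
      refine ⟨k, k + 2, hk1, le_rfl, by omega, by omega, ?_⟩
      have harc := hbN (k - 2) (by omega)
      have e1 : ((k - 2 + 2 : ℕ) : Fin m) = ((m - 2 : ℕ) : Fin m) + ((k + 2 : ℕ) : Fin m) := by
        rw [show k - 2 + 2 = k by omega, hc2]
        push_cast; ring
      have e2 : ((k - 2 : ℕ) : Fin m) = ((m - 2 : ℕ) : Fin m) + ((k : ℕ) : Fin m) := by
        obtain ⟨d, rfl⟩ : ∃ d, k = d + 2 := ⟨k - 2, by omega⟩
        rw [show d + 2 - 2 = d by omega, hc2]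
        push_cast; ring
      rw [e1, e2] at harc
      exact harc
    · -- k = m - 2
      refine ⟨m - 3, m - 1, by omega, by omega, by omega, le_rfl, ?_⟩
      have harc := hbN (m - 5) (by omega)
      have e1 : ((m - 5 + 2 : ℕ) : Fin m) = ((m - 2 : ℕ) : Fin m) + ((m - 1 : ℕ) : Fin m) := by
        rw [show m - 5 + 2 = m - 3 by omega, hc2, cast_sub_small (by omega),
          cast_sub_small (by omega)]
        ring
      have e2 : ((m - 5 : ℕ) : Fin m) = ((m - 2 : ℕ) : Fin m) + ((m - 3 : ℕ) : Fin m) := by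
        rw [hc2, cast_sub_small (by omega), cast_sub_small (by omega)]
        ring
      rw [e1, e2] at harc
      exact harc

end Cases

end Tournament
namespace Tournament

section Cases2
variable {m : ℕ} [NeZero m]

lemma cast_nat_ne {a b : ℕ} (ha : a < m) (hb : b < m) (hne : a ≠ b) :
    (a : Fin m) ≠ (b : Fin m) := fun h => hne ((fin_cast_inj ha hb).1 h)

lemma add_cast_ne_add_cast (c : Fin m) {a b : ℕ} (ha : a < m) (hb : b < m) (hne : a ≠ b) :
    c + (a : Fin m) ≠ c + (b : Fin m) := fun h => cast_nat_ne ha hb hne (add_left_cancel h)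

variable (U : Tournament (Fin m))

lemma caseAdj_core (hm : 8 ≤ m) (hcyc : ∀ i, U.adj i (i + 1) = true)
    (hb : ∀ s : Fin m, s ≠ ((m-2:ℕ):Fin m) → s ≠ ((m-1:ℕ):Fin m) → U.adj (s + 2) s = true)
    (hf1 : U.adj ((m-2:ℕ):Fin m) (((m-2:ℕ):Fin m) + 2) = true)
    (hf2 : U.adj ((m-1:ℕ):Fin m) (((m-1:ℕ):Fin m) + 2) = true) :
    3 ≤ Nat.card {x : Fin m // U.Noncritical x} ∨
      (∀ a b, U.adj a b = (lineT m).adj a b) := by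
  have hbN : ∀ s : ℕ, s ≤ m - 3 → U.adj ((s+2:ℕ):Fin m) ((s:ℕ):Fin m) = true := by
    intro s hs
    have h1 : ((s:ℕ):Fin m) ≠ ((m-2:ℕ):Fin m) := cast_nat_ne (by omega) (by omega) (by omega)
    have h2 : ((s:ℕ):Fin m) ≠ ((m-1:ℕ):Fin m) := cast_nat_ne (by omega) (by omega) (by omega)
    have h3 := hb _ h1 h2
    rwa [show ((s:ℕ):Fin m) + 2 = ((s+2:ℕ):Fin m) by push_cast; ring] at h3
  have hN1 : U.Noncritical ((m-1:ℕ):Fin m) := by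
    have h := U.noncrit_succ_of_fwd hm hcyc _ hf1
    rwa [show ((m-2:ℕ):Fin m) + 1 = ((m-1:ℕ):Fin m) by
      rw [cast_sub_small (by omega), cast_sub_small (by omega)]; ring] at h
  have hN0 : U.Noncritical 0 := by
    have h := U.noncrit_succ_of_fwd hm hcyc _ hf2
    rwa [show ((m-1:ℕ):Fin m) + 1 = 0 by rw [cast_sub_small (by omega)]; ring] at h
  by_cases hall : ∀ x y : ℕ, x + 2 ≤ y → y ≤ m - 1 → U.adj ((y:ℕ):Fin m) ((x:ℕ):Fin m) = true
  · right
    intro a b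
    rcases lt_trichotomy a b with h | h | h
    · have hv : a.val < b.val := h
      have hline : (lineT m).adj a b = decide (b.val = a.val + 1) := by
        show (if a < b then _ else _) = _
        rw [if_pos h]
      rw [hline]
      by_cases hsucc : b.val = a.val + 1
      · have hb1 : b = a + 1 := by
          apply Fin.ext
          rw [fin_val_add_one (by omega)]
          rw [if_neg (by have := b.isLt; omega)]
          omega
        rw [hb1] at hsucc
        rw [hb1, hcyc a]
        simp [hsucc]
      · have hhh := hall a.val b.val (by omega) (by have := b.isLt; omega)
        rw [Fin.cast_val_eq_self, Fin.cast_val_eq_self] at hhh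
        have hfalse : U.adj a b = false := U.adj_asymm (ne_of_lt h).symm hhh
        rw [hfalse]
        simp [hsucc]
    · subst h
      rw [U.irrefl, (lineT m).irrefl]
    · have hv : b.val < a.val := h
      have hline : (lineT m).adj a b = !decide (a.val = b.val + 1) := by
        show (if a < b then _ else _) = _
        rw [if_neg (not_lt_of_gt h), if_pos h]
      rw [hline]
      by_cases hsucc : a.val = b.val + 1
      · have ha1 : a = b + 1 := by
          apply Fin.ext
          rw [fin_val_add_one (by omega)]
          rw [if_neg (by have := a.isLt; omega)]
          omega
        have hfalse : U.adj a b = false := by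
          rw [ha1]
          exact U.adj_asymm (U.ne_of_adj (hcyc b)) (hcyc b)
        rw [hfalse]
        simp [hsucc]
      · have hhh := hall b.val a.val (by omega) (by have := a.isLt; omega)
        rw [Fin.cast_val_eq_self, Fin.cast_val_eq_self] at hhh
        rw [hhh]
        simp [hsucc]
  · left
    push_neg at hall
    obtain ⟨x, y, hxy2, hym, hneg⟩ := hall
    have hfwd : U.adj ((x:ℕ):Fin m) ((y:ℕ):Fin m) = true :=
      U.adj_of_not_adj (cast_nat_ne (by omega) (by omega) (by omega)) hneg
    by_cases hy2 : y = x + 2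
    · subst hy2
      exact absurd (hbN x (by omega)) hneg
    · have hy3 : x + 3 ≤ y := by omega
      by_cases hym2 : y ≤ m - 2
      · have hmid := U.noncrit_midA hm hcyc x y hy3 hym2 hbN hfwd
        refine three_le_nat_card_subtype 0 ((x+1:ℕ):Fin m) ((m-1:ℕ):Fin m) ?_ ?_ ?_ hN0 hmid hN1
        · rw [← Nat.cast_zero]
          exact cast_nat_ne (by omega) (by omega) (by omega)
        · rw [← Nat.cast_zero]
          exact cast_nat_ne (by omega) (by omega) (by omega)
        · exact cast_nat_ne (by omega) (by omega) (by omega)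
      · have hym1 : y = m - 1 := by omega
        subst hym1
        by_cases hx0 : x = 0
        · subst hx0
          exfalso
          have hc := hcyc ((m-1:ℕ):Fin m)
          rw [show ((m-1:ℕ):Fin m) + 1 = 0 by rw [cast_sub_small (by omega)]; ring] at hc
          have := U.adj_asymm (U.ne_of_adj hc) hc
          rw [show ((0:ℕ):Fin m) = 0 by simp] at hfwd
          rw [hfwd] at this
          simp at this
        · have hx1 : 1 ≤ x := by omega
          have hx4 : x ≤ m - 4 := by omega
          have hm2 := U.noncrit_m2 hm hcyc x hx1 hx4 hbN hfwd
          refine three_le_nat_card_subtype 0 ((m-2:ℕ):Fin m) ((m-1:ℕ):Fin m) ?_ ?_ ?_ hN0 hm2 hN1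
          · rw [← Nat.cast_zero]
            exact cast_nat_ne (by omega) (by omega) (by omega)
          · rw [← Nat.cast_zero]
            exact cast_nat_ne (by omega) (by omega) (by omega)
          · exact cast_nat_ne (by omega) (by omega) (by omega)

end Cases2

end Tournament
namespace Tournament

section Cases3
variable {m : ℕ} [NeZero m] (U : Tournament (Fin m))

lemma caseOne_result (hm : 8 ≤ m) (hcyc : ∀ i, U.adj i (i + 1) = true)
    (e : Fin m) (hb : ∀ s, s ≠ e → U.adj (s + 2) s = true) :
    3 ≤ Nat.card {x : Fin m // U.Noncritical x} := by
  have hEX : ∀ (c : Fin m) (k : ℕ), 2 ≤ k → k ≤ m - 3 → (c + (k : Fin m)) = e →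
      ¬ ((c + ((k-1 : ℕ) : Fin m)) = e) := by
    intro c k hk2 hk3 hke hke'
    exact add_cast_ne_add_cast c (show k < m by omega) (show k - 1 < m by omega)
      (by omega) (hke.trans hke'.symm)
  have key : ∀ c : Fin m, c + 1 ≠ e → c + ((m-3:ℕ) : Fin m) ≠ e → U.Noncritical c := by
    intro c h1 h2
    exact U.noncrit_of_almost_back hm hcyc (fun s => s = e) (fun s hs => hb s hs) c h1 h2
      (hEX c)
  have hc1 : U.Noncritical e := by
    apply key
    · have := add_cast_ne_add_cast e (show 1 < m by omega) (show 0 < m by omega) (by omega)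
      simpa using this
    · have := add_cast_ne_add_cast e (show m - 3 < m by omega) (show 0 < m by omega) (by omega)
      simpa using this
  have hc2 : U.Noncritical (e + 1) := by
    apply key
    · have h := add_cast_ne_add_cast e (show 2 < m by omega) (show 0 < m by omega) (by omega)
      simp only [Nat.cast_ofNat, Nat.cast_zero, add_zero] at h
      rwa [show e + 1 + 1 = e + 2 by ring]
    · have h := add_cast_ne_add_cast e (show m - 2 < m by omega) (show 0 < m by omega) (by omega)
      simp only [Nat.cast_zero, add_zero] at h
      rwa [show e + 1 + ((m-3:ℕ) : Fin m) = e + ((m-2:ℕ) : Fin m) by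
        rw [show m - 2 = (m-3)+1 by omega]; push_cast; ring]
  have hc3 : U.Noncritical (e + 2) := by
    apply key
    · have h := add_cast_ne_add_cast e (show 3 < m by omega) (show 0 < m by omega) (by omega)
      simp only [Nat.cast_ofNat, Nat.cast_zero, add_zero] at h
      rw [show e + 2 + 1 = e + 3 by ring]
      exact h
    · have h := add_cast_ne_add_cast e (show m - 1 < m by omega) (show 0 < m by omega) (by omega)
      simp only [Nat.cast_zero, add_zero] at h
      rwa [show e + 2 + ((m-3:ℕ) : Fin m) = e + ((m-1:ℕ) : Fin m) by
        rw [show m - 1 = (m-3)+2 by omega]; push_cast; ring]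
  refine three_le_nat_card_subtype e (e+1) (e+2) ?_ ?_ ?_ hc1 hc2 hc3
  · have h := add_cast_ne_add_cast e (show 0 < m by omega) (show 1 < m by omega) (by omega)
    simpa using h
  · have h := add_cast_ne_add_cast e (show 0 < m by omega) (show 2 < m by omega) (by omega)
    simpa using h
  · have h := add_cast_ne_add_cast e (show 1 < m by omega) (show 2 < m by omega) (by omega)
    simpa using h

lemma card_le_six (a b c d f g : Fin m) : ({a,b,c,d,f,g} : Finset (Fin m)).card ≤ 6 := by
  classical
  calc ({a,b,c,d,f,g} : Finset (Fin m)).card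
      ≤ ({b,c,d,f,g} : Finset (Fin m)).card + 1 := Finset.card_insert_le _ _
    _ ≤ (({c,d,f,g} : Finset (Fin m)).card + 1) + 1 :=
        Nat.add_le_add_right (Finset.card_insert_le _ _) 1
    _ ≤ ((({d,f,g} : Finset (Fin m)).card + 1) + 1) + 1 :=
        Nat.add_le_add_right (Nat.add_le_add_right (Finset.card_insert_le _ _) 1) 1
    _ ≤ (((({f,g} : Finset (Fin m)).card + 1) + 1) + 1) + 1 :=
        Nat.add_le_add_right (Nat.add_le_add_right (Nat.add_le_add_right
          (Finset.card_insert_le _ _) 1) 1) 1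
    _ ≤ ((((({g} : Finset (Fin m)).card + 1) + 1) + 1) + 1) + 1 :=
        Nat.add_le_add_right (Nat.add_le_add_right (Nat.add_le_add_right
          (Nat.add_le_add_right (Finset.card_insert_le _ _) 1) 1) 1) 1
    _ ≤ 6 := by rw [Finset.card_singleton]

lemma caseTwo_result (hm : 8 ≤ m) (hcyc : ∀ i, U.adj i (i + 1) = true)
    (e e' : Fin m) (hne : e ≠ e') (had1 : e' ≠ e + 1) (had2 : e ≠ e' + 1)
    (hfe : U.adj e (e + 2) = true) (hfe' : U.adj e' (e' + 2) = true)
    (hb : ∀ s, s ≠ e → s ≠ e' → U.adj (s + 2) s = true) :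
    3 ≤ Nat.card {x : Fin m // U.Noncritical x} := by
  classical
  have hone : (1 : Fin m) ≠ 0 := by
    have := cast_nat_ne (m := m) (a := 1) (b := 0) (by omega) (by omega) (by omega)
    simpa using this
  have hN1 : U.Noncritical (e + 1) := U.noncrit_succ_of_fwd hm hcyc e hfe
  have hN2 : U.Noncritical (e' + 1) := U.noncrit_succ_of_fwd hm hcyc e' hfe'
  set forb : Finset (Fin m) := {e - 1, e' - 1, e + 3, e' + 3, e + 1, e' + 1} with hforb
  obtain ⟨c, hc⟩ : ∃ c : Fin m, c ∉ forb := by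
    by_contra hcon
    push_neg at hcon
    have huniv : (Finset.univ : Finset (Fin m)) ⊆ forb := fun z _ => hcon z
    have h1 := Finset.card_le_card huniv
    have h2 : forb.card ≤ 6 := by rw [hforb]; exact card_le_six _ _ _ _ _ _
    rw [Finset.card_univ, Fintype.card_fin] at h1
    omega
  rw [hforb] at hc
  simp only [Finset.mem_insert, Finset.mem_singleton] at hc
  push_neg at hc
  obtain ⟨q1, q2, q3, q4, q5, q6⟩ := hc
  have hcast3 : ((3:ℕ) : Fin m) = 3 := by norm_num
  have hNc : U.Noncritical c := by
    apply U.noncrit_of_almost_back hm hcyc (fun s => s = e ∨ s = e')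
      (fun s hs => hb s (fun h => hs (Or.inl h)) (fun h => hs (Or.inr h))) c
    · rintro (h | h)
      · exact q1 (eq_sub_of_add_eq h)
      · exact q2 (eq_sub_of_add_eq h)
    · rintro (h | h)
      · apply q3
        have h' := eq_sub_of_add_eq h
        rwa [cast_sub_small (by omega), sub_neg_eq_add, hcast3] at h'
      · apply q4
        have h' := eq_sub_of_add_eq h
        rwa [cast_sub_small (by omega), sub_neg_eq_add, hcast3] at h'
    · intro k hk2 hk3 hke hke'
      have hkk : ((k:ℕ) : Fin m) = ((k-1:ℕ) : Fin m) + 1 := by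
        obtain ⟨d, rfl⟩ : ∃ d, k = d + 1 := ⟨k - 1, by omega⟩
        rw [show d + 1 - 1 = d by omega]
        push_cast; ring
      rcases hke with h | h <;> rcases hke' with h' | h'
      · exact add_cast_ne_add_cast c (show k < m by omega) (show k - 1 < m by omega)
          (by omega) (h.trans h'.symm)
      · -- c + k = e, c + (k-1) = e' : then e = e' + 1
        apply had2
        rw [← h, ← h', hkk]; ring
      · -- c + k = e', c + (k-1) = e : then e' = e + 1
        apply had1
        rw [← h, ← h', hkk]; ring
      · exact add_cast_ne_add_cast c (show k < m by omega) (show k - 1 < m by omega)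
          (by omega) (h.trans h'.symm)
  refine three_le_nat_card_subtype (e+1) (e'+1) c ?_ ?_ ?_ hN1 hN2 hNc
  · exact fun h => hne (add_right_cancel h)
  · exact fun h => q5 h.symm
  · exact fun h => q6 h.symm

lemma caseThree_result (hm : 8 ≤ m) (hcyc : ∀ i, U.adj i (i + 1) = true)
    (e1 e2 e3 : Fin m) (h12 : e1 ≠ e2) (h13 : e1 ≠ e3) (h23 : e2 ≠ e3)
    (hf1 : U.adj e1 (e1 + 2) = true) (hf2 : U.adj e2 (e2 + 2) = true)
    (hf3 : U.adj e3 (e3 + 2) = true) :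
    3 ≤ Nat.card {x : Fin m // U.Noncritical x} := by
  refine three_le_nat_card_subtype (e1+1) (e2+1) (e3+1)
    (fun h => h12 (add_right_cancel h)) (fun h => h13 (add_right_cancel h))
    (fun h => h23 (add_right_cancel h))
    (U.noncrit_succ_of_fwd hm hcyc e1 hf1) (U.noncrit_succ_of_fwd hm hcyc e2 hf2)
    (U.noncrit_succ_of_fwd hm hcyc e3 hf3)

lemma caseAdj_result (hm : 8 ≤ m) (hcyc : ∀ i, U.adj i (i + 1) = true)
    (e : Fin m) (hfe : U.adj e (e + 2) = true) (hfe1 : U.adj (e+1) ((e+1) + 2) = true)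
    (hb : ∀ s, s ≠ e → s ≠ e + 1 → U.adj (s + 2) s = true) :
    2 ≤ Nat.card {x : Fin m // U.Noncritical x} ∧
      (3 ≤ Nat.card {x : Fin m // U.Noncritical x} ∨ U.Iso (lineT m)) := by
  have hN1 : U.Noncritical (e + 1) := U.noncrit_succ_of_fwd hm hcyc e hfe
  have hN2 : U.Noncritical (e + 2) := by
    have h := U.noncrit_succ_of_fwd hm hcyc (e+1) hfe1
    rwa [show e + 1 + 1 = e + 2 by ring] at h
  have h2card : 2 ≤ Nat.card {x : Fin m // U.Noncritical x} := by
    refine two_le_nat_card_subtype (e+1) (e+2) ?_ hN1 hN2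
    have h := add_cast_ne_add_cast e (show 1 < m by omega) (show 2 < m by omega) (by omega)
    simpa using h
  refine ⟨h2card, ?_⟩
  set t : Fin m := e + 2 with ht
  set U' : Tournament (Fin m) :=
    ⟨fun x y => U.adj (x + t) (y + t), fun v => U.irrefl _,
     fun v w h => U.compl _ _ (fun hh => h (add_right_cancel hh))⟩ with hU'
  have hcyc' : ∀ i, U'.adj i (i + 1) = true := by
    intro i
    show U.adj (i + t) (i + 1 + t) = true
    rw [show i + 1 + t = (i + t) + 1 by ring]
    exact hcyc _
  have hcast2 : ((2:ℕ) : Fin m) = 2 := by norm_num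
  have hcast1 : ((1:ℕ) : Fin m) = 1 := by norm_num
  have hm2cast : ((m-2:ℕ) : Fin m) = -2 := by rw [cast_sub_small (by omega), hcast2]
  have hm1cast : ((m-1:ℕ) : Fin m) = -1 := by rw [cast_sub_small (by omega), hcast1]
  have hb' : ∀ s, s ≠ ((m-2:ℕ):Fin m) → s ≠ ((m-1:ℕ):Fin m) → U'.adj (s + 2) s = true := by
    intro s h1 h2'
    show U.adj (s + 2 + t) (s + t) = true
    rw [show s + 2 + t = (s + t) + 2 by ring]
    apply hb
    · intro hh
      apply h1
      rw [hm2cast]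
      have hs : s = e - t := eq_sub_of_add_eq hh
      rw [hs, ht]; ring
    · intro hh
      apply h2'
      rw [hm1cast]
      have hs : s = (e + 1) - t := eq_sub_of_add_eq hh
      rw [hs, ht]; ring
  have hf1' : U'.adj ((m-2:ℕ):Fin m) (((m-2:ℕ):Fin m) + 2) = true := by
    show U.adj (((m-2:ℕ):Fin m) + t) ((((m-2:ℕ):Fin m) + 2) + t) = true
    rw [hm2cast, show (-2 : Fin m) + t = e by rw [ht]; ring,
      show ((-2:Fin m) + 2) + t = e + 2 by rw [ht]; ring]
    exact hfe
  have hf2' : U'.adj ((m-1:ℕ):Fin m) (((m-1:ℕ):Fin m) + 2) = true := by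
    show U.adj (((m-1:ℕ):Fin m) + t) ((((m-1:ℕ):Fin m) + 2) + t) = true
    rw [hm1cast, show (-1 : Fin m) + t = e + 1 by rw [ht]; ring,
      show ((-1:Fin m) + 2) + t = (e + 1) + 2 by rw [ht]; ring]
    exact hfe1
  rcases U'.caseAdj_core hm hcyc' hb' hf1' hf2' with h3 | hlin
  · left
    have hcongr : Nat.card {x : Fin m // U'.Noncritical x} =
        Nat.card {x : Fin m // U.Noncritical x} := by
      apply Nat.card_congr
      exact Equiv.subtypeEquiv (Equiv.addRight t)
        (fun x => Iso.noncritical_iff (Equiv.addRight t) (fun a b => rfl) x)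
    rwa [hcongr] at h3
  · right
    have hUU' : U.Iso U' := by
      refine ⟨Equiv.subRight t, fun a b => ?_⟩
      show U.adj a b = U.adj (a - t + t) (b - t + t)
      rw [sub_add_cancel, sub_add_cancel]
    exact hUU'.trans ⟨Equiv.refl _, fun a b => hlin a b⟩

end Cases3

end Tournament
namespace Tournament

section Master
variable {m : ℕ} [NeZero m] (U : Tournament (Fin m))

lemma master_fin (hm : 8 ≤ m) (hcyc : ∀ i, U.adj i (i + 1) = true) :
    2 ≤ Nat.card {x : Fin m // U.Noncritical x} ∧
      (3 ≤ Nat.card {x : Fin m // U.Noncritical x} ∨ U.Iso (lineT m)) := by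
  classical
  set F : Finset (Fin m) := Finset.univ.filter (fun s => U.adj s (s + 2) = true) with hF
  have hFmem : ∀ s, s ∈ F ↔ U.adj s (s + 2) = true := by intro s; simp [hF]
  have htwo : (2 : Fin m) ≠ 0 := by
    have := cast_nat_ne (m := m) (a := 2) (b := 0) (by omega) (by omega) (by omega)
    simpa using this
  have hback : ∀ s, s ∉ F → U.adj (s + 2) s = true := by
    intro s hs
    apply U.adj_of_not_adj
    · intro h
      have h' : s + 0 = s + 2 := by simpa using h
      exact htwo (add_left_cancel h').symm
    · exact fun hh => hs ((hFmem s).2 hh)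
  rcases le_or_gt 3 F.card with h3 | h3
  · obtain ⟨t, hts, htc⟩ := Finset.exists_subset_card_eq (s := F) (n := 3) h3
    obtain ⟨a, b, c, hab, hac, hbc, rfl⟩ := Finset.card_eq_three.1 htc
    have h3n := U.caseThree_result hm hcyc a b c hab hac hbc
      ((hFmem a).1 (hts (by simp))) ((hFmem b).1 (hts (by simp)))
      ((hFmem c).1 (hts (by simp)))
    exact ⟨by omega, Or.inl h3n⟩
  · by_cases hc0 : F.card = 0
    · have hFe : F = ∅ := Finset.card_eq_zero.1 hc0
      have h3n := U.caseOne_result hm hcyc 0 (fun s _ => hback s (by rw [hFe]; simp))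
      exact ⟨by omega, Or.inl h3n⟩
    · by_cases hc1 : F.card = 1
      · obtain ⟨e, hFe⟩ := Finset.card_eq_one.1 hc1
        have h3n := U.caseOne_result hm hcyc e
          (fun s hs => hback s (by rw [hFe]; simpa using hs))
        exact ⟨by omega, Or.inl h3n⟩
      · have hc2 : F.card = 2 := by omega
        obtain ⟨e, e', hne, hFe⟩ := Finset.card_eq_two.1 hc2
        have hfe : U.adj e (e + 2) = true := (hFmem e).1 (by rw [hFe]; simp)
        have hfe' : U.adj e' (e' + 2) = true := (hFmem e').1 (by rw [hFe]; simp)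
        have hbb : ∀ s, s ≠ e → s ≠ e' → U.adj (s + 2) s = true := by
          intro s h1 h2
          exact hback s (by rw [hFe]; simp [h1, h2])
        by_cases had1 : e' = e + 1
        · exact U.caseAdj_result hm hcyc e hfe (by rw [← had1]; exact hfe')
            (fun s h1 h2 => hbb s h1 (by rw [had1]; exact h2))
        · by_cases had2 : e = e' + 1
          · exact U.caseAdj_result hm hcyc e' hfe' (by rw [← had2]; exact hfe)
              (fun s h1 h2 => hbb s (by rw [had2]; exact h2) h1)
          · have h3n := U.caseTwo_result hm hcyc e e' hne had1 had2 hfe hfe' hbb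
            exact ⟨by omega, Or.inl h3n⟩

end Master

section LemA

lemma lemA {X : Type*} [Fintype X] [DecidableEq X] (S : Tournament X)
    (hm : 8 ≤ Fintype.card X) (hS : S.Strong) :
    2 ≤ Nat.card {x : X // S.Noncritical x} ∧
      (3 ≤ Nat.card {x : X // S.Noncritical x} ∨ S.Iso (lineT (Fintype.card X))) := by
  haveI : NeZero (Fintype.card X) := ⟨by omega⟩
  obtain ⟨g, hgbij, hgadj⟩ := S.exists_ham hS (by omega)
  set ge : Fin (Fintype.card X) ≃ X := Equiv.ofBijective g hgbij with hge
  set U : Tournament (Fin (Fintype.card X)) :=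
    ⟨fun i j => S.adj (ge i) (ge j), fun i => S.irrefl _,
     fun i j h => S.compl _ _ (fun hh => h (ge.injective hh))⟩ with hU
  have hUcyc : ∀ i, U.adj i (i + 1) = true := by
    intro i
    show S.adj (g i) (g (i + 1)) = true
    have h := hgadj i
    rwa [cyc_eq_add_one] at h
  have hcnt : Nat.card {x : Fin (Fintype.card X) // U.Noncritical x} =
      Nat.card {x : X // S.Noncritical x} := by
    apply Nat.card_congr
    exact Equiv.subtypeEquiv ge (fun i => Iso.noncritical_iff ge (fun a b => rfl) i)
  obtain ⟨h2, h3⟩ := U.master_fin hm hUcyc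
  rw [hcnt] at h2
  refine ⟨h2, ?_⟩
  rcases h3 with h3 | hiso
  · left; rwa [hcnt] at h3
  · right
    have hSU : S.Iso U := by
      refine ⟨ge.symm, fun a b => ?_⟩
      show S.adj a b = S.adj (ge (ge.symm a)) (ge (ge.symm b))
      rw [Equiv.apply_symm_apply, Equiv.apply_symm_apply]
    exact hSU.trans hiso

end LemA

end Tournament
namespace Tournament

section Count
variable {V : Type} (T : Tournament V)

/-- Flatten a subtype-of-subtype restriction. -/
lemma noncrit_restrict_pair (w : V) (x : {y : V // y ∈ {y : V | y ≠ w}})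
    (hx : (T.restrict {y | y ≠ w}).Noncritical x) :
    (T.restrict {y : V | y ≠ w ∧ y ≠ x.val}).Strong := by
  refine Iso.strong (T := (T.restrict {y : V | y ≠ w}).restrict {z | z ≠ x}) ?_ hx
  refine ⟨⟨fun z => ⟨z.val.val, ⟨z.val.prop, fun h => z.prop (Subtype.ext h)⟩⟩,
    fun y => ⟨⟨y.val, y.prop.1⟩, fun h => y.prop.2 (congrArg Subtype.val h)⟩,
    ?_, ?_⟩, fun a b => rfl⟩
  · intro z
    apply Subtype.ext
    apply Subtype.ext
    rfl
  · intro y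
    rfl

lemma pair_finset_cases [DecidableEq V] {a b c d : V} (hab : a ≠ b) (h : ({a, b} : Finset V) = {c, d}) :
    (a = c ∧ b = d) ∨ (a = d ∧ b = c) := by
  classical
  have ha : a ∈ ({c, d} : Finset V) := by rw [← h]; simp
  have hb : b ∈ ({c, d} : Finset V) := by rw [← h]; simp
  have hc : c ∈ ({a, b} : Finset V) := by rw [h]; simp
  simp only [Finset.mem_insert, Finset.mem_singleton] at ha hb hc
  rcases ha with h1 | h1 <;> rcases hb with h2 | h2
  · exact absurd (h1.trans h2.symm) hab
  · exact Or.inl ⟨h1, h2⟩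
  · exact Or.inr ⟨h1, h2⟩
  · rcases hc with h3 | h3
    · exact Or.inl ⟨h3.symm, h2⟩
    · exact Or.inr ⟨h1, h3.symm⟩

end Count

end Tournament

theorem statement_6' (n : ℕ) (hn : 9 ≤ n) {V : Type} (T : Tournament V)
    (hcard : Nat.card V = n) (hT : T.Strong)
    (huniq : ∀ w1 w2 : V,
      (T.Noncritical w1 ∧ (T.restrict {x | x ≠ w1}).Iso (Tournament.lineT (n - 1))) →
      (T.Noncritical w2 ∧ (T.restrict {x | x ≠ w2}).Iso (Tournament.lineT (n - 1))) →
      w1 = w2) :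
    (4 ≤ Nat.card {x : V // T.Noncritical x} → 6 ≤ T.strongSubCount (n - 2)) ∧
    (5 ≤ Nat.card {x : V // T.Noncritical x} → 7 ≤ T.strongSubCount (n - 2)) := by
  classical
  have hfinite : Finite V := Nat.finite_of_card_ne_zero (by omega)
  haveI := hfinite
  haveI : Fintype V := Fintype.ofFinite V
  have hcardV : Fintype.card V = n := by rw [← Nat.card_eq_fintype_card]; exact hcard
  have main : ∀ k : ℕ, 4 ≤ k → k ≤ Nat.card {x : V // T.Noncritical x} →
      3 * k - 1 ≤ 2 * T.strongSubCount (n - 2) := by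
    intro k hk4 hk
    have hNCcard : Nat.card {x : V // T.Noncritical x} =
        (Finset.univ.filter (fun x => T.Noncritical x)).card := by
      rw [Nat.card_eq_fintype_card, Fintype.card_subtype]
    obtain ⟨W, hWsub, hWcard⟩ := Finset.exists_subset_card_eq
      (s := Finset.univ.filter (fun x => T.Noncritical x)) (n := k) (by omega)
    have hWnc : ∀ w ∈ W, T.Noncritical w := fun w hw => (Finset.mem_filter.1 (hWsub hw)).2
    set D : V → Finset V := fun w => Finset.univ.filter
      (fun x => x ≠ w ∧ (T.restrict {y : V | y ≠ w ∧ y ≠ x}).Strong) with hD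
    have hsubcard : ∀ w : V, Fintype.card ({y : V | y ≠ w} : Set V) = n - 1 := by
      intro w
      have h1 : Fintype.card ({y : V | y ≠ w} : Set V) = Fintype.card {x : V // ¬ (x = w)} :=
        Fintype.card_congr (Equiv.subtypeEquivRight (fun x => Iff.rfl))
      rw [h1, Fintype.card_subtype_compl, Fintype.card_subtype_eq, hcardV]
    have hDlow : ∀ w ∈ W, 2 ≤ (D w).card ∧
        (¬ (T.restrict {x : V | x ≠ w}).Iso (Tournament.lineT (n-1)) → 3 ≤ (D w).card) := by
      intro w hw
      have hstrong : (T.restrict {x : V | x ≠ w}).Strong := hWnc w hw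
      have hc8 : Fintype.card ({x : V | x ≠ w} : Set V) = n - 1 := hsubcard w
      have hlem := Tournament.lemA (T.restrict {x : V | x ≠ w}) (by rw [hc8]; omega) hstrong
      rw [hc8] at hlem
      have hinj : Nat.card {x' : ({x : V | x ≠ w} : Set V) //
          (T.restrict {x : V | x ≠ w}).Noncritical x'} ≤ (D w).card := by
        rw [Nat.card_eq_fintype_card]
        have hle : Fintype.card {x' : ({x : V | x ≠ w} : Set V) //
            (T.restrict {x : V | x ≠ w}).Noncritical x'} ≤
            Fintype.card {x : V // x ∈ D w} := by
          apply Fintype.card_le_of_injective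
            (fun x' => ⟨x'.val.val, by
              rw [hD]
              simp only [Finset.mem_filter, Finset.mem_univ, true_and]
              exact ⟨x'.val.prop, T.noncrit_restrict_pair w x'.val x'.prop⟩⟩)
          intro a b hab
          apply Subtype.ext
          apply Subtype.ext
          show (a.val.val : V) = b.val.val
          have hval := hab
          simp only [Subtype.mk.injEq] at hval
          exact hval
        rwa [Fintype.card_coe] at hle
      exact ⟨le_trans hlem.1 hinj, fun hniso => by
        rcases hlem.2 with h3 | hiso
        · exact le_trans h3 hinj
        · exact absurd hiso hniso⟩
    set P : Finset (V × V) :=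
      Finset.univ.filter (fun p : V × V => p.1 ∈ W ∧ p.2 ∈ D p.1) with hP
    have hPfst : ∀ p ∈ P, p.1 ∈ W := by
      intro p hp
      rw [hP] at hp
      exact (Finset.mem_filter.1 hp).2.1
    have hPcard : P.card = ∑ w ∈ W, (D w).card := by
      rw [Finset.card_eq_sum_card_fiberwise hPfst]
      apply Finset.sum_congr rfl
      intro w hw
      have himg : P.filter (fun p => p.1 = w) = (D w).image (fun x => (w, x)) := by
        ext p
        constructor
        · intro hp
          obtain ⟨hpP, hp1⟩ := Finset.mem_filter.1 hp
          rw [hP] at hpP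
          simp only [Finset.mem_filter, Finset.mem_univ, true_and] at hpP
          apply Finset.mem_image.2
          refine ⟨p.2, ?_, ?_⟩
          · rw [← hp1]; exact hpP.2
          · rw [Prod.ext_iff]; exact ⟨hp1.symm, rfl⟩
        · intro hp
          obtain ⟨x, hx, hxe⟩ := Finset.mem_image.1 hp
          rw [← hxe]
          apply Finset.mem_filter.2
          refine ⟨?_, rfl⟩
          rw [hP]
          simp only [Finset.mem_filter, Finset.mem_univ, true_and]
          exact ⟨hw, hx⟩
      rw [himg, Finset.card_image_of_injective _ (fun x y h => (Prod.ext_iff.1 h).2)]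
    have hbadcard : (W.filter
        (fun w => (T.restrict {x : V | x ≠ w}).Iso (Tournament.lineT (n-1)))).card ≤ 1 := by
      apply Finset.card_le_one.2
      intro a ha b hb
      simp only [Finset.mem_filter] at ha hb
      exact huniq a b ⟨hWnc a ha.1, ha.2⟩ ⟨hWnc b hb.1, hb.2⟩
    have hsum : 3 * k - 1 ≤ ∑ w ∈ W, (D w).card := by
      rw [← Finset.sum_filter_add_sum_filter_not W
        (fun w => (T.restrict {x : V | x ≠ w}).Iso (Tournament.lineT (n-1)))]
      have hBsum : (W.filter (fun w =>
          (T.restrict {x : V | x ≠ w}).Iso (Tournament.lineT (n-1)))).card * 2 ≤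
          ∑ w ∈ W.filter (fun w =>
            (T.restrict {x : V | x ≠ w}).Iso (Tournament.lineT (n-1))), (D w).card := by
        have := Finset.card_nsmul_le_sum (W.filter (fun w =>
          (T.restrict {x : V | x ≠ w}).Iso (Tournament.lineT (n-1)))) (fun w => (D w).card) 2
          (fun w hw => (hDlow w (Finset.filter_subset _ _ hw)).1)
        simpa [smul_eq_mul] using this
      have hGsum : (W.filter (fun w =>
          ¬ (T.restrict {x : V | x ≠ w}).Iso (Tournament.lineT (n-1)))).card * 3 ≤
          ∑ w ∈ W.filter (fun w =>
            ¬ (T.restrict {x : V | x ≠ w}).Iso (Tournament.lineT (n-1))), (D w).card := by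
        have := Finset.card_nsmul_le_sum (W.filter (fun w =>
          ¬ (T.restrict {x : V | x ≠ w}).Iso (Tournament.lineT (n-1)))) (fun w => (D w).card) 3
          (fun w hw => by
            have hmem := Finset.mem_filter.1 hw
            exact (hDlow w hmem.1).2 hmem.2)
        simpa [smul_eq_mul] using this
      have hsplit : (W.filter (fun w =>
          (T.restrict {x : V | x ≠ w}).Iso (Tournament.lineT (n-1)))).card +
          (W.filter (fun w =>
            ¬ (T.restrict {x : V | x ≠ w}).Iso (Tournament.lineT (n-1)))).card = k := by
        rw [Finset.card_filter_add_card_filter_not, hWcard]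
      omega
    set I : Finset (Finset V) := P.image
      (fun p : V × V => ((Finset.univ : Finset V) \ {p.1, p.2})) with hI
    have hPne : ∀ p ∈ P, p.2 ≠ p.1 := by
      intro p hp
      rw [hP] at hp
      simp only [Finset.mem_filter, Finset.mem_univ, true_and] at hp
      have := hp.2
      rw [hD] at this
      simp only [Finset.mem_filter, Finset.mem_univ, true_and] at this
      exact this.1
    have hfiber : P.card ≤ 2 * I.card := by
      apply Finset.card_le_mul_card_image
      intro a ha
      obtain ⟨p0, hp0, hp0f⟩ := Finset.mem_image.1 ha
      have hsub : P.filter (fun p => (Finset.univ : Finset V) \ {p.1, p.2} = a) ⊆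
          {p0, (p0.2, p0.1)} := by
        intro p hp
        obtain ⟨hpP, hpf⟩ := Finset.mem_filter.1 hp
        have heq : ((Finset.univ : Finset V) \ {p.1, p.2}) =
            ((Finset.univ : Finset V) \ {p0.1, p0.2}) := by rw [hpf, hp0f]
        have hpair : ({p.1, p.2} : Finset V) = {p0.1, p0.2} := by
          have key : ∀ s : Finset V, (Finset.univ : Finset V) \
              ((Finset.univ : Finset V) \ s) = s := by
            intro s
            rw [Finset.sdiff_sdiff_self_left, Finset.univ_inter]
          rw [← key {p.1, p.2}, ← key {p0.1, p0.2}, heq]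
        rcases Tournament.pair_finset_cases (a := p.1) (b := p.2) (c := p0.1) (d := p0.2)
          (Ne.symm (hPne p hpP)) hpair with ⟨h1, h2⟩ | ⟨h1, h2⟩
        · simp [Prod.ext_iff, h1, h2]
        · simp [Prod.ext_iff, h1, h2]
      calc (P.filter (fun p => (Finset.univ : Finset V) \ {p.1, p.2} = a)).card
          ≤ ({p0, (p0.2, p0.1)} : Finset (V × V)).card := Finset.card_le_card hsub
        _ ≤ 2 := by
            apply le_trans (Finset.card_insert_le _ _)
            rw [Finset.card_singleton]
    have hIgood : ∀ s ∈ I, s.card = n - 2 ∧ (T.restrict ↑s).Strong := by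
      intro s hs
      obtain ⟨p, hp, rfl⟩ := Finset.mem_image.1 hs
      have hne := hPne p hp
      have hmem : p.1 ∈ W ∧ p.2 ∈ D p.1 := by
        rw [hP] at hp
        simpa using (Finset.mem_filter.1 hp).2
      have hstrongpair : (T.restrict {y : V | y ≠ p.1 ∧ y ≠ p.2}).Strong := by
        have := hmem.2
        rw [hD] at this
        simp only [Finset.mem_filter, Finset.mem_univ, true_and] at this
        exact this.2
      constructor
      · rw [Finset.card_sdiff_of_subset (Finset.subset_univ _), Finset.card_univ, hcardV]
        rw [Finset.card_insert_of_notMem (by simpa using Ne.symm hne), Finset.card_singleton]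
      · have hcoe : (↑((Finset.univ : Finset V) \ {p.1, p.2}) : Set V) =
            {y : V | y ≠ p.1 ∧ y ≠ p.2} := by
          ext z
          simp [not_or]
        rw [hcoe]
        exact hstrongpair
    have hIcount : I.card ≤ T.strongSubCount (n - 2) := by
      rw [Tournament.strongSubCount, Nat.card_eq_fintype_card, Fintype.card_subtype]
      apply Finset.card_le_card
      intro s hs
      simp only [Finset.mem_filter, Finset.mem_univ, true_and]
      exact hIgood s hs
    omega
  constructor
  · intro h4
    have := main 4 le_rfl h4
    omega
  · intro h5
    have := main 5 (by omega) h5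
    omega

/-- **Lemma 3.** Let `T` be a strongly connected tournament of order `n ≥ 9`
having at most one non-critical vertex `w` with `T - w ≅ T_{n-2,n-1}`.  If `T`
has at least `4` non-critical vertices then `s_{n-2}(T) ≥ 6`; if it has at
least `5` non-critical vertices then `s_{n-2}(T) ≥ 7`. -/
theorem statement_6 (n : ℕ) (hn : 9 ≤ n) {V : Type} (T : Tournament V)
    (hcard : Nat.card V = n) (hT : T.Strong)
    (huniq : ∀ w1 w2 : V,
      (T.Noncritical w1 ∧ (T.restrict {x | x ≠ w1}).Iso (Tournament.lineT (n - 1))) →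
      (T.Noncritical w2 ∧ (T.restrict {x | x ≠ w2}).Iso (Tournament.lineT (n - 1))) →
      w1 = w2) :
    (4 ≤ Nat.card {x : V // T.Noncritical x} → 6 ≤ T.strongSubCount (n - 2)) ∧
    (5 ≤ Nat.card {x : V // T.Noncritical x} → 7 ≤ T.strongSubCount (n - 2)) := by
  exact statement_6' n hn T hcard hT huniq
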